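/- Let f ∈ P = ℂ[X_0, X_1, X_2] be a squarefree homogeneous polynomial of degree d ≥ 2 such that the Krull dimension of P/J(f) is at most 1, and let τ be the stable value of dim_ℂ (P/J(f))_k for large k (the global Tjurina number). If the syzygy module Syz = {(a_0, a_1, a_2) ∈ P³ : a_0·∂f/∂X_0 + a_1·∂f/∂X_1 + a_2·∂f/∂X_2 = 0} is a free graded P-module with a homogeneous basis of two syzygies, then (d−1)² − I ≤ τ, where I = (d−1)²/4 if d is odd and I = d(d−2)/4 if d is even. -/

import Mathlib

open MvPolynomial

noncomputable section

/-- The polynomial ring `P = ℂ[X_0, X_1, X_2]`. -/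
abbrev P3 : Type := MvPolynomial (Fin 3) ℂ

/-- The gradient (jacobian) ideal `J(f) = (∂f/∂X_0, ∂f/∂X_1, ∂f/∂X_2)`. -/
def jacobianIdeal3 (f : P3) : Ideal P3 :=
  Ideal.span (Set.range fun i => MvPolynomial.pderiv i f)

/-- The degree-`k` graded piece of `P/I`: the image in `P/I` of the space of
homogeneous polynomials of degree `k`, viewed as a `ℂ`-subspace. -/
def quotPiece3 (I : Ideal P3) (k : ℕ) : Submodule ℂ (P3 ⧸ I) :=
  Submodule.map (Ideal.Quotient.mkₐ ℂ I).toLinearMap (homogeneousSubmodule (Fin 3) ℂ k)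

/-- The module of syzygies of the partial derivatives of `f`:
triples `(a_0, a_1, a_2)` with `a_0·∂f/∂X_0 + a_1·∂f/∂X_1 + a_2·∂f/∂X_2 = 0`. -/
def syzygyModule (f : P3) : Submodule P3 (Fin 3 → P3) where
  carrier := {a | ∑ i, a i * MvPolynomial.pderiv i f = 0}
  zero_mem' := by simp
  add_mem' := by
    intro a b ha hb
    simp only [Set.mem_setOf_eq] at *
    simp [Pi.add_apply, add_mul, Finset.sum_add_distrib, ha, hb]
  smul_mem' := by
    intro c a ha
    simp only [Set.mem_setOf_eq] at *
    simp [Pi.smul_apply, smul_eq_mul, mul_assoc, ← Finset.mul_sum, ha]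

/-! Auxiliary definitions -/

open Module

abbrev Vh (n : ℕ) : Submodule ℂ P3 := homogeneousSubmodule (Fin 3) ℂ n

def Nd (n : ℕ) : ℕ := (n + 2).choose 2

def degreeSubtypeEquivSym (n : ℕ) : ↑{d : Fin 3 →₀ ℕ | Finsupp.degree d = n} ≃ Sym (Fin 3) n :=
  Equiv.subtypeEquiv (Finsupp.orderIsoMultiset (ι := Fin 3)).toEquiv (by
    intro d
    show d.degree = n ↔ Multiset.card d.toMultiset = n
    rw [Finsupp.card_toMultiset]
    rfl)

instance (n : ℕ) : Fintype ↑{d : Fin 3 →₀ ℕ | Finsupp.degree d = n} :=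
  Fintype.ofEquiv _ (degreeSubtypeEquivSym n).symm

lemma card_degreeSubtype (n : ℕ) :
    Fintype.card ↑{d : Fin 3 →₀ ℕ | Finsupp.degree d = n} = Nd n := by
  rw [Fintype.card_congr (degreeSubtypeEquivSym n), Sym.card_sym_eq_choose]
  have h3 : Fintype.card (Fin 3) = 3 := by simp
  rw [h3]
  have : 3 + n - 1 = n + 2 := by omega
  rw [this]
  have := Nat.choose_symm (n := n + 2) (k := n) (by omega)
  have h2 : n + 2 - n = 2 := by omega
  rw [h2] at this
  rw [← this]
  rfl

lemma finrank_Vh (n : ℕ) : finrank ℂ (Vh n) = Nd n := by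
  rw [show (Vh n : Submodule ℂ P3) = restrictSupport ℂ {d | Finsupp.degree d = n} from
    homogeneousSubmodule_eq_finsupp_supported (Fin 3) ℂ n]
  rw [finrank_eq_card_basis (basisRestrictSupport ℂ _)]
  exact card_degreeSubtype n

instance (n : ℕ) : FiniteDimensional ℂ
    (restrictSupport ℂ {d : Fin 3 →₀ ℕ | Finsupp.degree d = n}) :=
  Module.Finite.of_basis (basisRestrictSupport ℂ _)

instance (n : ℕ) : FiniteDimensional ℂ (Vh n) := by
  rw [show (Vh n : Submodule ℂ P3) = restrictSupport ℂ {d | Finsupp.degree d = n} from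
    homogeneousSubmodule_eq_finsupp_supported (Fin 3) ℂ n]
  infer_instance

lemma two_Nd (n : ℕ) : 2 * Nd n = (n + 1) * (n + 2) := by
  rw [Nd, Nat.choose_two_right]
  have h1 : n + 2 - 1 = n + 1 := by omega
  rw [h1]
  have hd2 : 2 ∣ (n + 2) * (n + 1) := by
    have h := (Nat.even_mul_succ_self (n + 1)).two_dvd
    rwa [show (n + 1) * (n + 1 + 1) = (n + 2) * (n + 1) from by ring] at h
  rw [Nat.mul_div_cancel' hd2]
  ring

lemma hc_mul_homog (c h : P3) {m : ℕ} (hh : h.IsHomogeneous m) (n : ℕ) :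
    homogeneousComponent (n + m) (c * h) = homogeneousComponent n c * h := by
  conv_lhs => rw [← MvPolynomial.sum_homogeneousComponent c, Finset.sum_mul, map_sum]
  have key : ∀ j : ℕ, homogeneousComponent (n + m) (homogeneousComponent j c * h)
      = if j = n then homogeneousComponent j c * h else 0 := by
    intro j
    have hmem : homogeneousComponent j c * h ∈ homogeneousSubmodule (Fin 3) ℂ (j + m) :=
      (mem_homogeneousSubmodule _ _).2
        ((homogeneousComponent_isHomogeneous j c).mul hh)
    rw [homogeneousComponent_of_mem hmem]
    by_cases hj : j = n
    · simp [hj]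
    · simp [hj, show ¬ (n + m = j + m) by omega, Ne.symm hj]
  simp_rw [key]
  rw [Finset.sum_ite_eq' (Finset.range (c.totalDegree + 1)) n
    (fun j => homogeneousComponent j c * h)]
  by_cases hn : n ∈ Finset.range (c.totalDegree + 1)
  · simp [hn]
  · simp only [hn, if_false]
    rw [homogeneousComponent_eq_zero, zero_mul]
    simpa using Nat.lt_of_succ_le (Nat.le_of_not_lt (by simpa using hn))

lemma degree_sub_single {s : Fin 3 →₀ ℕ} {i : Fin 3} (h : s i ≠ 0) :
    Finsupp.degree (s - Finsupp.single i 1) = Finsupp.degree s - 1 := by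
  have hle : Finsupp.single i 1 ≤ s := by
    rw [Finsupp.single_le_iff]; omega
  have hadd : (s - Finsupp.single i 1) + Finsupp.single i 1 = s := tsub_add_cancel_of_le hle
  have hdeg : Finsupp.degree ((s - Finsupp.single i 1) + Finsupp.single i 1)
      = Finsupp.degree (s - Finsupp.single i 1) + Finsupp.degree (Finsupp.single i 1) := by
    simp [Finsupp.degree_eq_weight_one, map_add]
  have hsing : Finsupp.degree (Finsupp.single i (1:ℕ)) = 1 := by
    exact Finsupp.degree_single i 1
  rw [hadd] at hdeg
  omega

lemma pderiv_homog {f : P3} {d : ℕ} (hfh : f.IsHomogeneous d) (i : Fin 3) :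
    (pderiv i f).IsHomogeneous (d - 1) := by
  conv_lhs => rw [f.as_sum]
  rw [map_sum]
  apply MvPolynomial.IsHomogeneous.sum
  intro s hsup
  rw [pderiv_monomial]
  by_cases hsi : s i = 0
  · rw [hsi]
    simp only [Nat.cast_zero, mul_zero]
    rw [monomial_zero]
    exact isHomogeneous_zero _ _ _
  · apply isHomogeneous_monomial
    have hds : Finsupp.degree s = d := by
      rw [Finsupp.degree_eq_weight_one]
      exact hfh (mem_support_iff.1 hsup)
    rw [degree_sub_single hsi, hds]

section LinearLayer

def phiMap (f : P3) (e : ℕ) : (Fin 3 → Vh e) →ₗ[ℂ] P3 where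
  toFun σ := ∑ i, (σ i : P3) * pderiv i f
  map_add' x y := by simp [add_mul, Finset.sum_add_distrib]
  map_smul' c x := by simp [smul_mul_assoc, Finset.smul_sum]

def gMap (f : P3) (k : ℕ) : Vh k →ₗ[ℂ] (P3 ⧸ jacobianIdeal3 f) :=
  (Ideal.Quotient.mkₐ ℂ (jacobianIdeal3 f)).toLinearMap ∘ₗ (Vh k).subtype

lemma range_gMap (f : P3) (k : ℕ) :
    LinearMap.range (gMap f k) = quotPiece3 (jacobianIdeal3 f) k := by
  rw [gMap, LinearMap.range_comp, Submodule.range_subtype]; rfl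

lemma quot_rank_nullity (f : P3) (k : ℕ) :
    finrank ℂ (quotPiece3 (jacobianIdeal3 f) k)
      + finrank ℂ (LinearMap.ker (gMap f k)) = Nd k := by
  rw [← range_gMap, LinearMap.finrank_range_add_finrank_ker, finrank_Vh]

lemma mem_ker_gMap (f : P3) (k : ℕ) (x : Vh k) :
    x ∈ LinearMap.ker (gMap f k) ↔ (x : P3) ∈ jacobianIdeal3 f := by
  rw [LinearMap.mem_ker]
  show Ideal.Quotient.mkₐ ℂ (jacobianIdeal3 f) (x : P3) = 0 ↔ _
  rw [Ideal.Quotient.mkₐ_eq_mk, Ideal.Quotient.eq_zero_iff_mem]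

lemma range_phiMap (f : P3) {d : ℕ} (hfh : f.IsHomogeneous d) (e : ℕ) :
    LinearMap.range (phiMap f e) =
      Submodule.map (Vh (e + (d - 1))).subtype
        (LinearMap.ker (gMap f (e + (d - 1)))) := by
  ext p
  constructor
  · rintro ⟨σ, rfl⟩
    have hmem : (∑ i, (σ i : P3) * pderiv i f) ∈ Vh (e + (d - 1)) := by
      rw [mem_homogeneousSubmodule]
      apply MvPolynomial.IsHomogeneous.sum
      intro i _
      exact ((mem_homogeneousSubmodule _ _).1 (σ i).2).mul (pderiv_homog hfh i)
    refine ⟨⟨∑ i, (σ i : P3) * pderiv i f, hmem⟩, ?_, rfl⟩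
    rw [SetLike.mem_coe, mem_ker_gMap]
    show (∑ i, (σ i : P3) * pderiv i f) ∈ jacobianIdeal3 f
    exact Ideal.sum_mem _ fun i _ =>
      Ideal.mul_mem_left _ _ (Ideal.subset_span (Set.mem_range_self i))
  · rintro ⟨⟨p, hp⟩, hker, rfl⟩
    rw [SetLike.mem_coe, mem_ker_gMap] at hker
    rw [jacobianIdeal3, Ideal.span] at hker
    obtain ⟨c, hc⟩ := (Submodule.mem_span_range_iff_exists_fun P3).1 hker
    refine ⟨fun i => ⟨homogeneousComponent e (c i), homogeneousComponent_mem e (c i)⟩, ?_⟩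
    show (∑ i, homogeneousComponent e (c i) * pderiv i f) = (Vh (e + (d-1))).subtype ⟨p, hp⟩
    rw [Submodule.subtype_apply]
    have h1 : ∀ i : Fin 3, homogeneousComponent e (c i) * pderiv i f
        = homogeneousComponent (e + (d - 1)) (c i * pderiv i f) := fun i =>
      (hc_mul_homog (c i) (pderiv i f) (pderiv_homog hfh i) e).symm
    simp_rw [h1, ← map_sum]
    have h2 : (∑ i, c i * pderiv i f) = p := by
      simpa [smul_eq_mul] using hc
    rw [h2, homogeneousComponent_of_mem hp, if_pos rfl]

lemma ker_gMap_dim (f : P3) {d : ℕ} (hfh : f.IsHomogeneous d) (e : ℕ) :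
    finrank ℂ (LinearMap.ker (gMap f (e + (d - 1))))
      = finrank ℂ (LinearMap.range (phiMap f e)) := by
  rw [range_phiMap f hfh e, Submodule.finrank_map_subtype_eq]

lemma phi_rank_nullity (f : P3) (e : ℕ) :
    finrank ℂ (LinearMap.range (phiMap f e))
      + finrank ℂ (LinearMap.ker (phiMap f e)) = 3 * Nd e := by
  rw [LinearMap.finrank_range_add_finrank_ker]
  rw [Module.finrank_pi_fintype]
  simp [finrank_Vh]

def embMap (e : ℕ) : (Fin 3 → Vh e) →ₗ[ℂ] (Fin 3 → P3) :=
  LinearMap.pi fun i => (Vh e).subtype ∘ₗ LinearMap.proj i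

lemma embMap_inj (e : ℕ) : Function.Injective (embMap e) := by
  intro x y h
  funext i
  exact Subtype.ext (congrFun h i)

def rhoMap (s t : Fin 3 → P3) (m1 m2 : ℕ) : (Vh m1 × Vh m2) →ₗ[ℂ] (Fin 3 → P3) where
  toFun uv := fun i => (uv.1 : P3) * s i + (uv.2 : P3) * t i
  map_add' x y := by
    funext i
    simp only [Submodule.coe_add, Prod.fst_add, Prod.snd_add, Pi.add_apply]
    ring
  map_smul' c x := by
    funext i
    simp [smul_mul_assoc, smul_add]

end LinearLayer

section Main

variable {f : P3} {d a b : ℕ} {s t : Fin 3 → P3}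

lemma rho_inj (B : Basis (Fin 2) P3 (syzygyModule f))
    (hB0 : (B 0).val = s) (hB1 : (B 1).val = t) (m1 m2 : ℕ) :
    Function.Injective (rhoMap s t m1 m2) := by
  rw [← LinearMap.ker_eq_bot, Submodule.eq_bot_iff]
  rintro ⟨u, v⟩ huv
  rw [LinearMap.mem_ker] at huv
  have huv' : ∀ i, (u : P3) * s i + (v : P3) * t i = 0 := fun i => congrFun huv i
  have hz : (u : P3) • B 0 + (v : P3) • B 1 = 0 := by
    apply Subtype.ext
    rw [Submodule.coe_add, Submodule.coe_smul, Submodule.coe_smul, hB0, hB1]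
    show ((u : P3) • s + (v : P3) • t) = (0 : Fin 3 → P3)
    funext i
    simpa [smul_eq_mul] using huv' i
  have hli := B.linearIndependent
  rw [Fintype.linearIndependent_iff] at hli
  have hsum : ∑ i : Fin 2, ![(u : P3), (v : P3)] i • B i = 0 := by
    rw [Fin.sum_univ_two]
    simp only [Matrix.cons_val_zero, Matrix.cons_val_one, Matrix.head_cons]
    exact hz
  have hzero := hli ![(u : P3), (v : P3)] hsum
  have hu : (u : P3) = 0 := hzero 0
  have hv : (v : P3) = 0 := hzero 1
  exact Prod.ext (Subtype.ext hu) (Subtype.ext hv)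

lemma map_ker_phi (hs : s ∈ syzygyModule f) (ht : t ∈ syzygyModule f)
    (hsh : ∀ i, (s i).IsHomogeneous a) (hth : ∀ i, (t i).IsHomogeneous b)
    (B : Basis (Fin 2) P3 (syzygyModule f)) (hB0 : (B 0).val = s) (hB1 : (B 1).val = t)
    (m1 m2 : ℕ) (heq : a + m1 = b + m2) :
    Submodule.map (embMap (a + m1)) (LinearMap.ker (phiMap f (a + m1)))
      = LinearMap.range (rhoMap s t m1 m2) := by
  ext w
  constructor
  · rintro ⟨σ, hσ, rfl⟩
    rw [SetLike.mem_coe, LinearMap.mem_ker] at hσ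
    have hzmem : (fun i => (σ i : P3)) ∈ syzygyModule f := hσ
    set z : syzygyModule f := ⟨fun i => (σ i : P3), hzmem⟩ with hzdef
    set u := B.repr z 0 with hu
    set v := B.repr z 1 with hv
    have hrep : u • s + v • t = fun i => (σ i : P3) := by
      have h := B.sum_repr z
      rw [Fin.sum_univ_two] at h
      have h2 := congrArg Subtype.val h
      rw [Submodule.coe_add, Submodule.coe_smul, Submodule.coe_smul, hB0, hB1] at h2
      exact h2
    refine ⟨(⟨homogeneousComponent m1 u, homogeneousComponent_mem m1 u⟩,
             ⟨homogeneousComponent m2 v, homogeneousComponent_mem m2 v⟩), ?_⟩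
    show (fun i => homogeneousComponent m1 u * s i + homogeneousComponent m2 v * t i)
        = embMap (a + m1) σ
    funext i
    show homogeneousComponent m1 u * s i + homogeneousComponent m2 v * t i = (σ i : P3)
    have hcoord : u * s i + v * t i = (σ i : P3) := by
      have h3 := congrFun hrep i
      simpa [smul_eq_mul] using h3
    have h1 : homogeneousComponent m1 u * s i
        = homogeneousComponent (m1 + a) (u * s i) := (hc_mul_homog u (s i) (hsh i) m1).symm
    have h2 : homogeneousComponent m2 v * t i
        = homogeneousComponent (m2 + b) (v * t i) := (hc_mul_homog v (t i) (hth i) m2).symm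
    have e1 : m1 + a = a + m1 := add_comm _ _
    have e2 : m2 + b = a + m1 := by omega
    rw [h1, h2, e1, e2, ← map_add, hcoord,
      homogeneousComponent_of_mem (σ i).2, if_pos rfl]
  · rintro ⟨⟨u, v⟩, rfl⟩
    have hmem : ∀ i, (u : P3) * s i + (v : P3) * t i ∈ Vh (a + m1) := by
      intro i
      rw [mem_homogeneousSubmodule]
      apply MvPolynomial.IsHomogeneous.add
      · have h := ((mem_homogeneousSubmodule _ _).1 u.2).mul (hsh i)
        rwa [add_comm] at h
      · have h := ((mem_homogeneousSubmodule _ _).1 v.2).mul (hth i)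
        have e2 : m2 + b = a + m1 := by omega
        rwa [e2] at h
    refine ⟨fun i => ⟨(u : P3) * s i + (v : P3) * t i, hmem i⟩, ?_, ?_⟩
    · rw [SetLike.mem_coe, LinearMap.mem_ker]
      show ∑ i, ((u : P3) * s i + (v : P3) * t i) * pderiv i f = 0
      have hs' : ∑ i, s i * pderiv i f = 0 := hs
      have ht' : ∑ i, t i * pderiv i f = 0 := ht
      calc ∑ i, ((u : P3) * s i + (v : P3) * t i) * pderiv i f
          = (u : P3) * ∑ i, s i * pderiv i f + (v : P3) * ∑ i, t i * pderiv i f := by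
            rw [Finset.mul_sum, Finset.mul_sum, ← Finset.sum_add_distrib]
            apply Finset.sum_congr rfl
            intro i _
            ring
        _ = 0 := by rw [hs', ht']; ring
    · rfl

set_option maxHeartbeats 1000000 in
lemma count_eq (hfh : f.IsHomogeneous d)
    (hs : s ∈ syzygyModule f) (ht : t ∈ syzygyModule f)
    (hsh : ∀ i, (s i).IsHomogeneous a) (hth : ∀ i, (t i).IsHomogeneous b)
    (B : Basis (Fin 2) P3 (syzygyModule f)) (hB0 : (B 0).val = s) (hB1 : (B 1).val = t)
    (m1 m2 : ℕ) (heq : a + m1 = b + m2) :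
    finrank ℂ (quotPiece3 (jacobianIdeal3 f) (a + m1 + (d - 1))) + 3 * Nd (a + m1)
      = Nd (a + m1 + (d - 1)) + (Nd m1 + Nd m2) := by
  have A1 := quot_rank_nullity f (a + m1 + (d - 1))
  have A2 := ker_gMap_dim f hfh (a + m1)
  have A3 := phi_rank_nullity f (a + m1)
  have A4 : finrank ℂ (LinearMap.ker (phiMap f (a + m1))) = Nd m1 + Nd m2 := by
    have e1 : finrank ℂ (LinearMap.ker (phiMap f (a + m1)))
        = finrank ℂ (Submodule.map (embMap (a + m1)) (LinearMap.ker (phiMap f (a + m1)))) :=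
      LinearEquiv.finrank_eq (Submodule.equivMapOfInjective (embMap (a + m1))
        (embMap_inj (a + m1)) (LinearMap.ker (phiMap f (a + m1))))
    rw [e1, map_ker_phi hs ht hsh hth B hB0 hB1 m1 m2 heq,
      LinearMap.finrank_range_of_inj (rho_inj B hB0 hB1 m1 m2),
      Module.finrank_prod, finrank_Vh, finrank_Vh]
  omega

end Main

theorem stmt_10 (f : P3) (d : ℕ) (hd : 2 ≤ d) (hsf : Squarefree f) (hfh : f.IsHomogeneous d)
    (hdim : ringKrullDim (P3 ⧸ jacobianIdeal3 f) ≤ 1)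
    (τ : ℕ)
    (hτ : ∃ N : ℕ, ∀ k, N ≤ k →
      Module.finrank ℂ (quotPiece3 (jacobianIdeal3 f) k) = τ)
    (a b : ℕ) (s t : Fin 3 → P3)
    (hs : s ∈ syzygyModule f) (ht : t ∈ syzygyModule f)
    (hsh : ∀ i, (s i).IsHomogeneous a) (hth : ∀ i, (t i).IsHomogeneous b)
    (B : Basis (Fin 2) P3 (syzygyModule f))
    (hB0 : (B 0).val = s) (hB1 : (B 1).val = t) :
    (d - 1) ^ 2 - (if Odd d then (d - 1) ^ 2 / 4 else d * (d - 2) / 4) ≤ τ := by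
  obtain ⟨N₀, hN⟩ := hτ
  obtain ⟨Dn, hDn⟩ : ∃ Dn, d - 1 = Dn := ⟨d - 1, rfl⟩
  have E1 := count_eq hfh hs ht hsh hth B hB0 hB1 (b + N₀) (a + N₀) (by omega)
  have E2 := count_eq hfh hs ht hsh hth B hB0 hB1 (b + N₀ + 1) (a + N₀ + 1) (by omega)
  rw [hN _ (by omega), hDn] at E1
  rw [hN _ (by omega), hDn] at E2
  have hNd : ∀ n : ℕ, 2 * ((Nd n : ℤ)) = ((n : ℤ) + 1) * ((n : ℤ) + 2) := fun n => by
    exact_mod_cast two_Nd n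
  have E1z : (τ : ℤ) + 3 * (Nd (a + (b + N₀)) : ℤ)
      = (Nd (a + (b + N₀) + Dn) : ℤ) + ((Nd (b + N₀) : ℤ) + (Nd (a + N₀) : ℤ)) := by
    exact_mod_cast E1
  have E2z : (τ : ℤ) + 3 * (Nd (a + (b + N₀ + 1)) : ℤ)
      = (Nd (a + (b + N₀ + 1) + Dn) : ℤ)
        + ((Nd (b + N₀ + 1) : ℤ) + (Nd (a + N₀ + 1) : ℤ)) := by
    exact_mod_cast E2
  have hab : a + b = Dn := by
    have h2 : 2 * ((a : ℤ) + b) = 2 * (Dn : ℤ) := by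
      linear_combination (norm := (push_cast; ring1)) 2 * E2z - 2 * E1z
        - 3 * hNd (a + (b + N₀ + 1)) + 3 * hNd (a + (b + N₀))
        + hNd (a + (b + N₀ + 1) + Dn) - hNd (a + (b + N₀) + Dn)
        + hNd (b + N₀ + 1) - hNd (b + N₀) + hNd (a + N₀ + 1) - hNd (a + N₀)
    omega
  have habz : (a : ℤ) + b = (Dn : ℤ) := by exact_mod_cast hab
  have hTz : 2 * (τ : ℤ) = 2 * (((Dn : ℤ)) ^ 2 - a * b) := by
    linear_combination (norm := (push_cast; ring1)) 2 * E1z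
      - 3 * hNd (a + (b + N₀)) + hNd (a + (b + N₀) + Dn)
      + hNd (b + N₀) + hNd (a + N₀)
      - ((a : ℤ) + b - (Dn : ℤ) + 2 * (N₀ : ℤ) + 3) * habz
  have hT : (τ : ℤ) = ((Dn : ℤ)) ^ 2 - a * b := by
    have := mul_left_cancel₀ (two_ne_zero (α := ℤ)) hTz
    exact this
  have hτab : τ + a * b = Dn ^ 2 := by
    have h3 : (τ : ℤ) + (a : ℤ) * b = ((Dn : ℤ)) ^ 2 := by linarith [hT]
    exact_mod_cast h3
  have hab4 : 4 * (a * b) ≤ Dn ^ 2 := by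
    have h1 : (4 * ((a : ℤ) * b) : ℤ) ≤ ((a : ℤ) + b) ^ 2 := by
      nlinarith [sq_nonneg ((a : ℤ) - b)]
    rw [habz] at h1
    exact_mod_cast h1
  rcases Nat.even_or_odd d with hev | hodd
  · rw [if_neg (Nat.not_odd_iff_even.mpr hev)]
    obtain ⟨m, hm⟩ := hev
    obtain ⟨p, hp⟩ : ∃ p, m = p + 1 := ⟨m - 1, by omega⟩
    have hI : d * (d - 2) / 4 = (p + 1) * p := by
      have h1 : d * (d - 2) = 4 * ((p + 1) * p) := by
        have h0 : d - 2 = 2 * p := by omega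
        rw [h0, hm, hp]; ring
      rw [h1, Nat.mul_div_cancel_left _ (by norm_num)]
    have hDn2 : Dn ^ 2 = 4 * ((p + 1) * p) + 1 := by
      have h2 : Dn = 2 * p + 1 := by omega
      rw [h2]; ring
    have hXle : a * b ≤ (p + 1) * p := by
      have h3 : 4 * (a * b) < 4 * ((p + 1) * p + 1) := by
        rw [hDn2] at hab4; omega
      exact Nat.lt_succ_iff.mp (Nat.lt_of_mul_lt_mul_left h3)
    rw [hI, hDn, Nat.sub_le_iff_le_add]
    have hτab' : τ + a * b = 4 * ((p + 1) * p) + 1 := by rw [hτab, hDn2]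
    linarith [hτab', hXle]
  · rw [if_pos hodd]
    obtain ⟨m, hm⟩ := hodd
    have hm1 : 1 ≤ m := by omega
    have h4 : Dn ^ 2 = 4 * (m * m) := by
      have h2 : Dn = 2 * m := by omega
      rw [h2]; ring
    rw [hDn, h4, Nat.mul_div_cancel_left _ (by norm_num), Nat.sub_le_iff_le_add]
    have hXle : a * b ≤ m * m := by
      rw [h4] at hab4
      exact Nat.le_of_mul_le_mul_left hab4 (by norm_num)
    linarith [hτab, hXle, h4]

end
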